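/- The set {z ∈ ℂ : H_A(z) = H_A(ψ_A)} is bounded. -/

import Mathlib

open Complex

/-- The level set `{Re G_A = G_A(ψ_A)}` is bounded. -/
theorem stmt_6 (q η : ℝ) (hq : q ∈ Set.Ioo (0:ℝ) 1) (hη : η ∈ Set.Ioo (-1:ℝ) 1)
    (m ψ : ℝ) (hm : m = ((1 - η) / 2) ^ 2) (hψ : ψ = q * (1 - η) / (1 + η))
    (H : ℂ → ℝ)
    (hH : H = fun z => ((q : ℂ) / (z + q)).re + η * Real.log (‖z + q‖)
      + m * Real.log (‖z‖)) :
    Bornology.IsBounded {z : ℂ | H z = H (ψ : ℂ)} := by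
  obtain ⟨hq0, hq1⟩ := hq
  obtain ⟨hη0, hη1⟩ := hη
  set K := H (ψ : ℂ) with hK
  set c : ℝ := η + m with hc
  have hcpos : 0 < c := by
    rw [hc, hm]; nlinarith [sq_nonneg (1 + η)]
  set R : ℝ := max 2 (Real.exp ((K + 1 + Real.log 2) / c)) with hR
  apply Bornology.IsBounded.subset (Metric.isBounded_closedBall (x := (0:ℂ)) (r := R))
  intro z hz
  simp only [Set.mem_setOf_eq] at hz
  simp only [Metric.mem_closedBall, dist_zero_right]
  by_contra hcon
  push_neg at hcon
  have hz2 : (2:ℝ) < ‖z‖ := lt_of_le_of_lt (le_max_left _ _) hcon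
  have hzpos : (0:ℝ) < ‖z‖ := by linarith
  have habsq : ‖(q:ℂ)‖ = q := by
    rw [Complex.norm_real, Real.norm_eq_abs, abs_of_pos hq0]
  have hlow : ‖z‖ - q ≤ ‖z + q‖ := by
    have h1 := norm_add_le (z + q) (-(q:ℂ))
    have h2 : ‖-(q:ℂ)‖ = q := by rw [norm_neg]; exact habsq
    rw [add_neg_cancel_right, h2] at h1
    linarith
  have hup : ‖z + q‖ ≤ ‖z‖ + q := by
    have := norm_add_le z (q:ℂ)
    rwa [habsq] at this
  have habs1 : (1:ℝ) ≤ ‖z + q‖ := by linarith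
  have habspos : (0:ℝ) < ‖z + q‖ := by linarith
  -- real part bound
  have hre : -1 ≤ ((q : ℂ) / (z + q)).re := by
    have h1 : ‖(q:ℂ) / (z + q)‖ ≤ q := by
      rw [norm_div, habsq]
      calc q / ‖z + q‖ ≤ q / 1 := by
            apply div_le_div_of_nonneg_left (le_of_lt hq0) one_pos habs1
        _ = q := div_one q
    have h2 := neg_abs_le (((q:ℂ) / (z + q)).re)
    have h3 := Complex.abs_re_le_norm ((q:ℂ) / (z + q))
    linarith
  -- log bound
  have hlog2 : (0:ℝ) ≤ Real.log 2 := Real.log_nonneg one_le_two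
  have hlogz : Real.log (‖z‖) = Real.log (‖z‖) := rfl
  have hlogbound : η * Real.log (‖z‖) - Real.log 2
      ≤ η * Real.log (‖z + q‖) := by
    rcases le_or_gt 0 η with hpos | hneg
    · have hhalf : ‖z‖ / 2 ≤ ‖z + q‖ := by
        have : q ≤ ‖z‖ / 2 := by linarith
        linarith
      have : Real.log (‖z‖ / 2) ≤ Real.log (‖z + q‖) :=
        Real.log_le_log (by linarith) hhalf
      rw [Real.log_div (ne_of_gt hzpos) two_ne_zero] at this
      nlinarith
    · have hdub : ‖z + q‖ ≤ 2 * ‖z‖ := by linarith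
      have : Real.log (‖z + q‖) ≤ Real.log (2 * ‖z‖) :=
        Real.log_le_log habspos hdub
      rw [Real.log_mul two_ne_zero (ne_of_gt hzpos)] at this
      nlinarith
  -- lower bound on H z
  have hHz : c * Real.log (‖z‖) - 1 - Real.log 2 ≤ H z := by
    rw [hH]
    simp only
    rw [hc, add_mul]
    linarith
  -- log |z| is large
  have hlogR : (K + 1 + Real.log 2) / c ≤ Real.log R := by
    calc (K + 1 + Real.log 2) / c
        = Real.log (Real.exp ((K + 1 + Real.log 2) / c)) := (Real.log_exp _).symm
      _ ≤ Real.log R := Real.log_le_log (Real.exp_pos _) (le_max_right _ _)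
  have hRpos : (0:ℝ) < R := lt_of_lt_of_le two_pos (le_max_left _ _)
  have hloggt : Real.log R < Real.log (‖z‖) :=
    Real.log_lt_log hRpos hcon
  have h1 : K + 1 + Real.log 2 ≤ Real.log R * c := (div_le_iff₀ hcpos).mp hlogR
  have h2 : c * Real.log R < c * Real.log (‖z‖) :=
    mul_lt_mul_of_pos_left hloggt hcpos
  have h3 : K + 1 + Real.log 2 < c * Real.log (‖z‖) := by
    rw [mul_comm] at h2; linarith
  linarith [hHz, hz]
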